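/- Let φ be the Peskin four-point kernel. For every r ∈ [0, 1], φ(r − 2)² + φ(r − 1)² + φ(r)² + φ(r + 1)² = 3/8. -/

import Mathlib

noncomputable def peskinPhi (r : ℝ) : ℝ :=
  if |r| ≤ 1 then (3 - 2 * |r| + Real.sqrt (1 + 4 * |r| - 4 * r ^ 2)) / 8
  else if |r| ≤ 2 then (5 - 2 * |r| - Real.sqrt (-7 + 12 * |r| - 4 * r ^ 2)) / 8
  else 0

theorem stmt_17 :
    ∀ r ∈ Set.Icc (0 : ℝ) 1,
      peskinPhi (r - 2) ^ 2 + peskinPhi (r - 1) ^ 2 + peskinPhi r ^ 2 +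
        peskinPhi (r + 1) ^ 2 = 3 / 8 := by
  rintro r ⟨h0, h1⟩
  have hs0 : (0:ℝ) ≤ 1 + 4 * r - 4 * r ^ 2 := by nlinarith
  have hu : Real.sqrt (1 + 4 * r - 4 * r ^ 2) ^ 2 = 1 + 4 * r - 4 * r ^ 2 :=
    Real.sq_sqrt hs0
  have hu0 : 0 ≤ Real.sqrt (1 + 4 * r - 4 * r ^ 2) := Real.sqrt_nonneg _
  set u := Real.sqrt (1 + 4 * r - 4 * r ^ 2) with hu_def
  have ha : |r| = r := abs_of_nonneg h0
  have hb : |r - 1| = 1 - r := by rw [abs_of_nonpos (by linarith)]; ring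
  have hc : |r - 2| = 2 - r := by rw [abs_of_nonpos (by linarith)]; ring
  have hd : |r + 1| = r + 1 := abs_of_nonneg (by linarith)
  have e1 : peskinPhi r = (3 - 2 * r + u) / 8 := by
    rw [peskinPhi, ha, if_pos h1, hu_def]
  have e2 : peskinPhi (r - 1) = (1 + 2 * r + u) / 8 := by
    rw [peskinPhi, hb, if_pos (by linarith : 1 - r ≤ 1),
      show 1 + 4 * (1 - r) - 4 * (r - 1) ^ 2 = 1 + 4 * r - 4 * r ^ 2 by ring, hu_def]
    ring
  have e3 : peskinPhi (r - 2) = (1 + 2 * r - u) / 8 := by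
    rcases le_or_gt (2 - r) 1 with h | h
    · have hr : r = 1 := le_antisymm h1 (by linarith)
      subst hr
      rw [peskinPhi, hc]
      norm_num
    · rw [peskinPhi, hc, if_neg (by linarith), if_pos (by linarith : 2 - r ≤ 2),
        show -7 + 12 * (2 - r) - 4 * (r - 2) ^ 2 = 1 + 4 * r - 4 * r ^ 2 by ring, hu_def]
      ring
  have e4 : peskinPhi (r + 1) = (3 - 2 * r - u) / 8 := by
    rcases le_or_gt (r + 1) 1 with h | h
    · have hr : r = 0 := le_antisymm (by linarith) h0
      subst hr
      rw [peskinPhi, hd]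
      norm_num
    · rw [peskinPhi, hd, if_neg (by linarith), if_pos (by linarith : r + 1 ≤ 2),
        show -7 + 12 * (r + 1) - 4 * (r + 1) ^ 2 = 1 + 4 * r - 4 * r ^ 2 by ring, hu_def]
      ring
  rw [e1, e2, e3, e4]
  nlinarith [hu]
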